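/- For a multivariate polynomial f(x) = Σ_α c_α x^α ∈ R[x_1,...,x_n] and a vertex α' of the Newton polytope of f (the convex hull of the exponent vectors with c_α ≠ 0), there exists a point x' ∈ R^n_{>0} such that sign(f(x')) = sign(c_{α'}). -/

import Mathlib

open MvPolynomial

/-- The Newton polytope of `f`: the convex hull in `ℝ^n` of the exponent vectors of the
monomials of `f` with nonzero coefficient. -/
noncomputable def newtonPolytope {n : ℕ} (f : MvPolynomial (Fin n) ℝ) : Set (Fin n → ℝ) :=
  convexHull ℝ ((fun (d : Fin n →₀ ℕ) (i : Fin n) => (d i : ℝ)) '' ↑f.support)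

private lemma sign_mul_pos {a b : ℝ} (ha : 0 < a) : Real.sign (a * b) = Real.sign b := by
  rcases lt_trichotomy b 0 with hb | hb | hb
  · rw [Real.sign_of_neg (mul_neg_of_pos_of_neg ha hb), Real.sign_of_neg hb]
  · simp [hb]
  · rw [Real.sign_of_pos (mul_pos ha hb), Real.sign_of_pos hb]

private lemma sign_eq_of_abs_sub_lt {x c : ℝ} (h : |x - c| < |c|) :
    Real.sign x = Real.sign c := by
  rcases lt_trichotomy c 0 with hc | hc | hc
  · have hx : x < 0 := by
      have := abs_sub_abs_le_abs_sub x c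
      have h1 := (abs_lt.1 h).2
      have h2 := (abs_lt.1 h).1
      rw [abs_of_neg hc] at h
      nlinarith [abs_lt.1 h]
    rw [Real.sign_of_neg hx, Real.sign_of_neg hc]
  · subst hc; simp at h; linarith [abs_nonneg x]
  · have hx : 0 < x := by
      rw [abs_of_pos hc] at h
      nlinarith [abs_lt.1 h]
    rw [Real.sign_of_pos hx, Real.sign_of_pos hc]

/-- **A vertex of the Newton polytope determines the sign of `f` somewhere on the positive
orthant.** If `α'` is an exponent of `f` whose image is a vertex (extreme point) of the Newton
polytope of `f`, then there exists `x' ∈ ℝ^n_{>0}` with `sign (f x') = sign (c_{α'})`. -/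
theorem exists_positive_point_sign_eq_of_vertex
    {n : ℕ} (f : MvPolynomial (Fin n) ℝ) (α' : Fin n →₀ ℕ)
    (hα' : α' ∈ f.support)
    (hvert : (fun i => ((α' i : ℕ) : ℝ)) ∈ (newtonPolytope f).extremePoints ℝ) :
    ∃ x' : Fin n → ℝ, (∀ i, 0 < x' i) ∧
      Real.sign (eval x' f) = Real.sign (coeff α' f) := by
  classical
  set p : Fin n → ℝ := fun i => ((α' i : ℕ) : ℝ) with hp_def
  set S : Set (Fin n → ℝ) :=
    (fun (d : Fin n →₀ ℕ) (i : Fin n) => (d i : ℝ)) '' ↑f.support with hS_def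
  have hSfin : S.Finite := f.support.finite_toSet.image _
  -- `p` is not in the convex hull of the other exponent vectors
  have hp : p ∉ convexHull ℝ (S \ {p}) := by
    have h := ((convex_convexHull ℝ S).mem_extremePoints_iff_mem_diff_convexHull_diff).1 hvert
    intro hc
    exact h.2 (convexHull_mono (Set.diff_subset_diff_left (subset_convexHull ℝ S)) hc)
  -- separate
  obtain ⟨L, u, hLu, hgt⟩ := geometric_hahn_banach_point_closed
    (convex_convexHull ℝ _) ((hSfin.diff (t := {p})).isClosed_convexHull (𝕜 := ℝ)) hp
  -- weights
  set w : (Fin n →₀ ℕ) → ℝ := fun d => -(L fun i => (d i : ℝ)) with hw_def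
  have hwlt : ∀ d ∈ f.support, d ≠ α' → w d < w α' := by
    intro d hd hne
    have hmem : (fun i => ((d i : ℕ) : ℝ)) ∈ S \ {p} := by
      refine ⟨Set.mem_image_of_mem _ hd, ?_⟩
      simp only [Set.mem_singleton_iff, hp_def]
      intro hEq
      apply hne
      ext i
      exact_mod_cast congrFun hEq i
    have := hgt _ (subset_convexHull ℝ _ hmem)
    simp only [hw_def]
    have : L p < L fun i => ((d i : ℕ) : ℝ) := lt_trans hLu this
    simpa [hp_def] using neg_lt_neg this
  -- w as a linear combination
  set v : Fin n → ℝ := fun i => -(L (fun j => if i = j then (1 : ℝ) else 0)) with hv_def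
  have hwsum : ∀ d : Fin n →₀ ℕ, w d = ∑ i, (d i : ℝ) * v i := by
    intro d
    have h1 : (fun i => ((d i : ℕ) : ℝ)) =
        ∑ i, ((d i : ℝ)) • fun j => if i = j then (1 : ℝ) else 0 :=
      pi_eq_sum_univ _
    simp only [hw_def, h1, map_sum, map_smul, smul_eq_mul, hv_def,
      ← Finset.sum_neg_distrib, mul_neg]
  -- the family of test points
  set x : ℝ → Fin n → ℝ := fun t i => t ^ (v i) with hx_def
  have hxpos : ∀ t : ℝ, 0 < t → ∀ i, 0 < x t i := fun t ht i => Real.rpow_pos_of_pos ht _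
  -- evaluation formula
  have heval : ∀ t : ℝ, 0 < t →
      eval (x t) f = ∑ d ∈ f.support, coeff d f * t ^ (w d) := by
    intro t ht
    rw [eval_eq']
    refine Finset.sum_congr rfl fun d _ => ?_
    congr 1
    have : ∀ i : Fin n, x t i ^ d i = Real.exp (Real.log t * ((d i : ℝ) * v i)) := by
      intro i
      rw [hx_def]
      rw [← Real.rpow_natCast (t ^ v i) (d i), ← Real.rpow_mul ht.le,
        Real.rpow_def_of_pos ht]
      ring_nf
    simp only [this, ← Real.exp_sum, ← Finset.mul_sum, ← hwsum d,
      Real.rpow_def_of_pos ht]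
  -- the normalized sum
  set c : ℝ := coeff α' f with hc_def
  have hcne : c ≠ 0 := by simpa [hc_def] using (mem_support_iff.1 hα')
  set g : ℝ → ℝ := fun t => ∑ d ∈ f.support, coeff d f * t ^ (w d - w α') with hg_def
  have hsplit : ∀ t : ℝ, 0 < t → eval (x t) f = t ^ (w α') * g t := by
    intro t ht
    rw [heval t ht, hg_def, Finset.mul_sum]
    refine Finset.sum_congr rfl fun d _ => ?_
    rw [← mul_assoc, mul_comm (t ^ w α') (coeff d f), mul_assoc,
      ← Real.rpow_add ht]
    ring_nf
  -- limit of g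
  have hg : Filter.Tendsto g Filter.atTop (nhds c) := by
    have h1 : Filter.Tendsto (fun t : ℝ => ∑ d ∈ f.support, coeff d f * t ^ (w d - w α'))
        Filter.atTop (nhds (∑ d ∈ f.support, if d = α' then c else 0)) := by
      refine tendsto_finset_sum _ fun d hd => ?_
      by_cases hde : d = α'
      · subst hde
        simp only [if_pos rfl, sub_self, Real.rpow_zero, mul_one, ← hc_def]
        exact tendsto_const_nhds
      · simp only [if_neg hde]
        have hneg : w d - w α' < 0 := sub_neg.2 (hwlt d hd hde)
        have h0 : Filter.Tendsto (fun t : ℝ => t ^ (w d - w α')) Filter.atTop (nhds 0) := by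
          have := tendsto_rpow_neg_atTop (y := -(w d - w α')) (by linarith)
          simpa using this
        simpa using h0.const_mul (coeff d f)
    rw [Finset.sum_ite_eq' f.support α' (fun _ => c), if_pos hα'] at h1
    exact h1
  -- pick t large
  obtain ⟨N, hN⟩ := Metric.tendsto_atTop.1 hg |c| (abs_pos.2 hcne)
  set t : ℝ := max N 1 with ht_def
  have ht : 0 < t := lt_of_lt_of_le one_pos (le_max_right _ _)
  have hdist : |g t - c| < |c| := by
    have := hN t (le_max_left _ _)
    rwa [Real.dist_eq] at this
  refine ⟨x t, hxpos t ht, ?_⟩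
  rw [hsplit t ht, sign_mul_pos (Real.rpow_pos_of_pos ht _)]
  exact sign_eq_of_abs_sub_lt hdist
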